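/- Let $\nu$ be a measure on $\mathbb{R}^d$ with $\nu(\{0\})=0$, and define $\mathcal{A}_1(\nu)(B) = \int_{\mathbb{R}^d \setminus \{0\}} \int_0^{|x|^{1/2}} \frac{2}{\pi}(|x| - r^2)^{-1/2} 1_B(r x/|x|)\,dr\,\nu(dx)$. Then $\mathcal{A}_1(\nu)$ is a L\'evy measure (i.e. $\int (1 \wedge |y|^2)\,\mathcal{A}_1(\nu)(dy) < \infty$) if and only if $\int_{\mathbb{R}^d} (1 \wedge |x|)\,\nu(dx) < \infty$. -/

import Mathlib

open MeasureTheory Real Set ENNReal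

variable {d : ℕ}

/-- The arcsine transformation `𝒜ₖ` of a measure on `ℝᵈ` (for `k = 1, 2`):
`𝒜ₖ(ν)(B) = ∫ ν(dx) ∫₀^{|x|^{k/2}} (2/π)(|x|^k - r²)^{-1/2} 1_B(r x/|x|) dr`. -/
noncomputable def arcsineT (k : ℝ) (ν : Measure (EuclideanSpace ℝ (Fin d))) :
    Measure (EuclideanSpace ℝ (Fin d)) :=
  (ν.restrict {(0 : EuclideanSpace ℝ (Fin d))}ᶜ).bind fun x =>
    Measure.map (fun r : ℝ => (r / ‖x‖) • x)
      ((volume.restrict (Set.Ioo (0 : ℝ) (‖x‖ ^ (k / 2)))).withDensity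
        (fun r => ENNReal.ofReal (2 / Real.pi * (‖x‖ ^ k - r ^ 2) ^ (-(1/2) : ℝ))))

section Aux
open intervalIntegral

lemma aux_T (a : ℝ) (ha : 0 < a) :
    ∫⁻ r in Set.Ioo (0:ℝ) a, ENNReal.ofReal ((a - r) ^ (-(1/2):ℝ)) =
      ENNReal.ofReal (2 * Real.sqrt a) := by
  have hint : IntegrableOn (fun r : ℝ => (a - r) ^ (-(1/2):ℝ)) (Set.Ioo 0 a) volume := by
    have h1 : IntervalIntegrable (fun u : ℝ => u ^ (-(1/2):ℝ)) volume 0 a :=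
      intervalIntegral.intervalIntegrable_rpow' (by norm_num)
    have h2 := (h1.comp_sub_left a).symm
    simp only [sub_zero, sub_self] at h2
    exact ((intervalIntegrable_iff_integrableOn_Ioc_of_le ha.le).1 h2).mono_set
      Set.Ioo_subset_Ioc_self
  have hnn : 0 ≤ᵐ[volume.restrict (Set.Ioo (0:ℝ) a)]
      (fun r : ℝ => (a - r) ^ (-(1/2):ℝ)) :=
    (ae_restrict_iff' measurableSet_Ioo).2 (Filter.Eventually.of_forall fun r hr =>
      Real.rpow_nonneg (by linarith [hr.2]) _)
  rw [← MeasureTheory.ofReal_integral_eq_lintegral_ofReal hint hnn]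
  congr 1
  rw [← MeasureTheory.integral_Ioc_eq_integral_Ioo,
    ← intervalIntegral.integral_of_le ha.le]
  have := intervalIntegral.integral_comp_sub_left (fun u : ℝ => u ^ (-(1/2):ℝ)) a
    (a := 0) (b := a)
  simp only [sub_zero, sub_self] at this
  rw [this, integral_rpow (Or.inl (by norm_num)), Real.zero_rpow (by norm_num),
    Real.sqrt_eq_rpow]
  ring_nf

lemma sqrt_facts (s : ℝ) (hs : 0 < s) :
    s ^ ((1:ℝ)/2) = Real.sqrt s ∧ (Real.sqrt s) ^ 2 = s := by
  constructor
  · rw [Real.sqrt_eq_rpow]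
  · exact Real.sq_sqrt hs.le

lemma aux_upper (s : ℝ) (hs : 0 < s) :
    ∫⁻ r in Set.Ioo (0:ℝ) (s ^ ((1:ℝ)/2)),
        ENNReal.ofReal (2 / Real.pi * (s - r ^ 2) ^ (-(1/2):ℝ)) *
          ENNReal.ofReal (min 1 (r ^ 2)) ≤
      2 * ENNReal.ofReal (min 1 s) := by
  set a := s ^ ((1:ℝ)/2) with hadef
  have haeq : a = Real.sqrt s := Real.sqrt_eq_rpow s ▸ rfl
  have ha : 0 < a := by rw [haeq]; exact Real.sqrt_pos.2 hs
  have ha2 : a ^ 2 = s := by rw [haeq]; exact Real.sq_sqrt hs.le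
  -- pointwise bound
  have step1 : ∫⁻ r in Set.Ioo (0:ℝ) a,
      ENNReal.ofReal (2 / Real.pi * (s - r ^ 2) ^ (-(1/2):ℝ)) *
        ENNReal.ofReal (min 1 (r ^ 2)) ≤
      ∫⁻ r in Set.Ioo (0:ℝ) a,
        (ENNReal.ofReal (2 / Real.pi * a ^ (-(1/2):ℝ)) * ENNReal.ofReal (min 1 s)) *
          ENNReal.ofReal ((a - r) ^ (-(1/2):ℝ)) := by
    apply MeasureTheory.lintegral_mono_ae
    refine (ae_restrict_iff' measurableSet_Ioo).2 (Filter.Eventually.of_forall ?_)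
    rintro r ⟨hr0, hra⟩
    have hr2 : r ^ 2 < s := by
      calc r ^ 2 < a ^ 2 := by nlinarith
      _ = s := ha2
    have hd1 : (s - r ^ 2) ^ (-(1/2):ℝ) ≤ a ^ (-(1/2):ℝ) * (a - r) ^ (-(1/2):ℝ) := by
      have hkey : a * (a - r) ≤ s - r ^ 2 := by nlinarith
      have hpos : 0 < a * (a - r) := by nlinarith
      calc (s - r ^ 2) ^ (-(1/2):ℝ) ≤ (a * (a - r)) ^ (-(1/2):ℝ) :=
            Real.rpow_le_rpow_of_nonpos hpos hkey (by norm_num)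
        _ = a ^ (-(1/2):ℝ) * (a - r) ^ (-(1/2):ℝ) :=
            Real.mul_rpow ha.le (by linarith)
    have h2 : ENNReal.ofReal (2 / Real.pi * (s - r ^ 2) ^ (-(1/2):ℝ)) ≤
        ENNReal.ofReal (2 / Real.pi * a ^ (-(1/2):ℝ)) *
          ENNReal.ofReal ((a - r) ^ (-(1/2):ℝ)) := by
      rw [← ENNReal.ofReal_mul (by positivity)]
      apply ENNReal.ofReal_le_ofReal
      calc 2 / Real.pi * (s - r ^ 2) ^ (-(1/2):ℝ)
          ≤ 2 / Real.pi * (a ^ (-(1/2):ℝ) * (a - r) ^ (-(1/2):ℝ)) := by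
            apply mul_le_mul_of_nonneg_left hd1 (by positivity)
        _ = 2 / Real.pi * a ^ (-(1/2):ℝ) * (a - r) ^ (-(1/2):ℝ) := by ring
    have h3 : ENNReal.ofReal (min 1 (r ^ 2)) ≤ ENNReal.ofReal (min 1 s) :=
      ENNReal.ofReal_le_ofReal (min_le_min le_rfl hr2.le)
    calc ENNReal.ofReal (2 / Real.pi * (s - r ^ 2) ^ (-(1/2):ℝ)) *
          ENNReal.ofReal (min 1 (r ^ 2))
        ≤ (ENNReal.ofReal (2 / Real.pi * a ^ (-(1/2):ℝ)) *
            ENNReal.ofReal ((a - r) ^ (-(1/2):ℝ))) * ENNReal.ofReal (min 1 s) :=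
          mul_le_mul' h2 h3
      _ = (ENNReal.ofReal (2 / Real.pi * a ^ (-(1/2):ℝ)) * ENNReal.ofReal (min 1 s)) *
            ENNReal.ofReal ((a - r) ^ (-(1/2):ℝ)) := by ring
  refine step1.trans ?_
  rw [MeasureTheory.lintegral_const_mul _ (by
    apply Measurable.ennreal_ofReal
    fun_prop)]
  rw [aux_T a ha]
  -- now pure arithmetic in ℝ≥0∞
  have hval : 2 / Real.pi * a ^ (-(1/2):ℝ) * (2 * Real.sqrt a) = 4 / Real.pi := by
    have hsa : Real.sqrt a = a ^ ((1:ℝ)/2) := Real.sqrt_eq_rpow a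
    rw [hsa]
    have : a ^ (-(1/2):ℝ) * a ^ ((1:ℝ)/2) = 1 := by
      rw [← Real.rpow_add ha]; norm_num
    field_simp
    nlinarith [this, Real.pi_pos]
  calc ENNReal.ofReal (2 / Real.pi * a ^ (-(1/2):ℝ)) * ENNReal.ofReal (min 1 s) *
        ENNReal.ofReal (2 * Real.sqrt a)
      = ENNReal.ofReal (2 / Real.pi * a ^ (-(1/2):ℝ) * (2 * Real.sqrt a)) *
          ENNReal.ofReal (min 1 s) := by
        rw [ENNReal.ofReal_mul (show (0:ℝ) ≤ 2 / Real.pi * a ^ (-(1/2):ℝ) by positivity),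
          mul_right_comm]
    _ = ENNReal.ofReal (4 / Real.pi) * ENNReal.ofReal (min 1 s) := by rw [hval]
    _ ≤ 2 * ENNReal.ofReal (min 1 s) := by
        apply mul_le_mul_left
        calc ENNReal.ofReal (4 / Real.pi) ≤ ENNReal.ofReal 2 := by
              apply ENNReal.ofReal_le_ofReal
              rw [div_le_iff₀ Real.pi_pos]
              nlinarith [Real.pi_gt_three]
          _ = 2 := by norm_num


lemma aux_lower (s : ℝ) (hs : 0 < s) :
    ENNReal.ofReal ((Real.sqrt 2 - 1) / Real.pi) * ENNReal.ofReal (min 1 s) ≤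
      ∫⁻ r in Set.Ioo (0:ℝ) (s ^ ((1:ℝ)/2)),
        ENNReal.ofReal (2 / Real.pi * (s - r ^ 2) ^ (-(1/2):ℝ)) *
          ENNReal.ofReal (min 1 (r ^ 2)) := by
  set a := s ^ ((1:ℝ)/2) with hadef
  have haeq : a = Real.sqrt s := Real.sqrt_eq_rpow s ▸ rfl
  have ha : 0 < a := by rw [haeq]; exact Real.sqrt_pos.2 hs
  have ha2 : a ^ 2 = s := by rw [haeq]; exact Real.sq_sqrt hs.le
  have hw : (0:ℝ) < Real.sqrt 2 := Real.sqrt_pos.2 (by norm_num)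
  have hw2 : (Real.sqrt 2) ^ 2 = 2 := Real.sq_sqrt (by norm_num)
  have hw1 : 1 < Real.sqrt 2 := by nlinarith
  set b := a * (Real.sqrt 2)⁻¹ with hbdef
  have hb0 : 0 < b := by positivity
  have hba : b < a := by
    rw [hbdef]
    nlinarith [mul_pos ha (by positivity : (0:ℝ) < (Real.sqrt 2)⁻¹ ), inv_lt_one_of_one_lt₀ hw1]
  have hb2 : b ^ 2 = s / 2 := by
    rw [hbdef, mul_pow, ha2, inv_pow, hw2]; ring
  set C : ℝ≥0∞ := ENNReal.ofReal (2 / Real.pi * (s/2) ^ (-(1/2):ℝ)) *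
      ENNReal.ofReal (min 1 s / 2) with hCdef
  have key : C * ENNReal.ofReal (a - b) ≤
      ∫⁻ r in Set.Ioo (0:ℝ) a,
        ENNReal.ofReal (2 / Real.pi * (s - r ^ 2) ^ (-(1/2):ℝ)) *
          ENNReal.ofReal (min 1 (r ^ 2)) := by
    have hsub : ∫⁻ r in Set.Ioo b a,
        ENNReal.ofReal (2 / Real.pi * (s - r ^ 2) ^ (-(1/2):ℝ)) *
          ENNReal.ofReal (min 1 (r ^ 2)) ≤
        ∫⁻ r in Set.Ioo (0:ℝ) a,
        ENNReal.ofReal (2 / Real.pi * (s - r ^ 2) ^ (-(1/2):ℝ)) *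
          ENNReal.ofReal (min 1 (r ^ 2)) :=
      lintegral_mono_set (fun r hr => ⟨lt_trans hb0 hr.1, hr.2⟩)
    refine le_trans ?_ hsub
    have hptwise : ∀ r ∈ Set.Ioo b a, C ≤
        ENNReal.ofReal (2 / Real.pi * (s - r ^ 2) ^ (-(1/2):ℝ)) *
          ENNReal.ofReal (min 1 (r ^ 2)) := by
      rintro r ⟨hrb, hra⟩
      have hr0 : 0 < r := lt_trans hb0 hrb
      have hr2s : r ^ 2 < s := by nlinarith
      have hr2b : s / 2 < r ^ 2 := by nlinarith
      have hd : (s/2) ^ (-(1/2):ℝ) ≤ (s - r ^ 2) ^ (-(1/2):ℝ) :=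
        Real.rpow_le_rpow_of_nonpos (by linarith) (by linarith) (by norm_num)
      have hm : min 1 s / 2 ≤ min 1 (r ^ 2) := by
        rcases le_total s 1 with h | h
        · rw [min_eq_right h]
          rcases le_total (r^2) 1 with h2 | h2
          · rw [min_eq_right h2]; linarith
          · rw [min_eq_left h2]; linarith
        · rw [min_eq_left h]
          rcases le_total (r^2) 1 with h2 | h2
          · rw [min_eq_right h2]; linarith
          · rw [min_eq_left h2]; linarith
      exact mul_le_mul' (ENNReal.ofReal_le_ofReal
          (mul_le_mul_of_nonneg_left hd (by positivity)))
        (ENNReal.ofReal_le_ofReal hm)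
    calc C * ENNReal.ofReal (a - b) = C * volume (Set.Ioo b a) := by
          rw [Real.volume_Ioo]
      _ = ∫⁻ _ in Set.Ioo b a, C := (setLIntegral_const _ _).symm
      _ ≤ _ := by
          apply MeasureTheory.lintegral_mono_ae
          exact (ae_restrict_iff' measurableSet_Ioo).2
            (Filter.Eventually.of_forall hptwise)
  refine le_trans (le_of_eq ?_) key
  have hm0 : (0:ℝ) ≤ min 1 s := le_min (by norm_num) hs.le
  have h1 : (0:ℝ) ≤ (Real.sqrt 2 - 1) / Real.pi :=
    div_nonneg (by linarith) Real.pi_pos.le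
  have h2 : (0:ℝ) ≤ 2 / Real.pi * (s/2) ^ (-(1/2):ℝ) := by positivity
  have h3 : (0:ℝ) ≤ 2 / Real.pi * (s/2) ^ (-(1/2):ℝ) * (min 1 s / 2) :=
    mul_nonneg h2 (by linarith)
  rw [hCdef, ← ENNReal.ofReal_mul h1, ← ENNReal.ofReal_mul h2, ← ENNReal.ofReal_mul h3]
  congr 1
  have hrpow : (s/2) ^ (-(1/2):ℝ) = (Real.sqrt (s/2))⁻¹ := by
    rw [Real.rpow_neg (by positivity), Real.sqrt_eq_rpow]
  have hsd : Real.sqrt (s/2) = Real.sqrt s / Real.sqrt 2 := Real.sqrt_div hs.le 2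
  have hsspos : 0 < Real.sqrt s := Real.sqrt_pos.2 hs
  rw [hrpow, hsd, hbdef, haeq]
  field_simp




lemma kernelMeas : Measurable (fun x : EuclideanSpace ℝ (Fin d) =>
    Measure.map (fun r : ℝ => (r / ‖x‖) • x)
      ((volume.restrict (Set.Ioo (0:ℝ) (‖x‖ ^ ((1:ℝ)/2)))).withDensity
        (fun r => ENNReal.ofReal (2 / Real.pi * (‖x‖ ^ (1:ℝ) - r ^ 2) ^ (-(1/2) : ℝ))))) := by
  apply Measure.measurable_of_measurable_coe
  intro t ht
  have hgx : ∀ x : EuclideanSpace ℝ (Fin d), Measurable fun r : ℝ => (r / ‖x‖) • x :=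
    fun x => (measurable_id.div_const _).smul_const x
  set D : (EuclideanSpace ℝ (Fin d)) × ℝ → ℝ≥0∞ :=
    fun p => ENNReal.ofReal (2 / Real.pi * (‖p.1‖ ^ (1:ℝ) - p.2 ^ 2) ^ (-(1/2) : ℝ))
    with hDdef
  set S : Set ((EuclideanSpace ℝ (Fin d)) × ℝ) :=
    ((fun p : (EuclideanSpace ℝ (Fin d)) × ℝ => (p.2 / ‖p.1‖) • p.1) ⁻¹' t) ∩
      ({p | 0 < p.2} ∩ {p | p.2 < ‖p.1‖ ^ ((1:ℝ)/2)}) with hSdef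
  have hg : Measurable (fun p : (EuclideanSpace ℝ (Fin d)) × ℝ => (p.2 / ‖p.1‖) • p.1) :=
    (measurable_snd.div measurable_fst.norm).smul measurable_fst
  have hS : MeasurableSet S := by
    refine (hg ht).inter (MeasurableSet.inter ?_ ?_)
    · exact measurableSet_lt measurable_const measurable_snd
    · exact measurableSet_lt measurable_snd (by fun_prop)
  have hD : Measurable D := by fun_prop
  have key : ∀ x : EuclideanSpace ℝ (Fin d),
      (Measure.map (fun r : ℝ => (r / ‖x‖) • x)
        ((volume.restrict (Set.Ioo (0:ℝ) (‖x‖ ^ ((1:ℝ)/2)))).withDensity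
          (fun r => ENNReal.ofReal (2 / Real.pi * (‖x‖ ^ (1:ℝ) - r ^ 2) ^ (-(1/2) : ℝ))))) t
      = ∫⁻ r, S.indicator D (x, r) ∂volume := by
    intro x
    rw [Measure.map_apply (hgx x) ht, MeasureTheory.withDensity_apply _ ((hgx x) ht),
      Measure.restrict_restrict ((hgx x) ht),
      ← MeasureTheory.lintegral_indicator (((hgx x) ht).inter measurableSet_Ioo)]
    congr 1
  simp_rw [key]
  exact (hD.indicator hS).lintegral_prod_right'

lemma kernel_lintegral (x : EuclideanSpace ℝ (Fin d)) (f : EuclideanSpace ℝ (Fin d) → ℝ≥0∞)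
    (hf : Measurable f) :
    ∫⁻ y, f y ∂(Measure.map (fun r : ℝ => (r / ‖x‖) • x)
      ((volume.restrict (Set.Ioo (0:ℝ) (‖x‖ ^ ((1:ℝ)/2)))).withDensity
        (fun r => ENNReal.ofReal (2 / Real.pi * (‖x‖ ^ (1:ℝ) - r ^ 2) ^ (-(1/2) : ℝ)))))
    = ∫⁻ r in Set.Ioo (0:ℝ) (‖x‖ ^ ((1:ℝ)/2)),
        ENNReal.ofReal (2 / Real.pi * (‖x‖ - r ^ 2) ^ (-(1/2) : ℝ)) *
          f ((r / ‖x‖) • x) := by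
  have hg : Measurable fun r : ℝ => (r / ‖x‖) • x := by fun_prop
  have hfg : Measurable fun a : ℝ => f ((a / ‖x‖) • x) := hf.comp hg
  rw [MeasureTheory.lintegral_map hf hg,
    MeasureTheory.lintegral_withDensity_eq_lintegral_mul _ (by fun_prop) hfg]
  simp [Real.rpow_one]

end Aux

theorem arcsineT_one_levyMeasure_iff (ν : Measure (EuclideanSpace ℝ (Fin d)))
    (hν : ν {0} = 0) :
    (∫⁻ y, ENNReal.ofReal (min 1 (‖y‖ ^ 2)) ∂(arcsineT 1 ν) < ⊤) ↔
      (∫⁻ x, ENNReal.ofReal (min 1 ‖x‖) ∂ν < ⊤) := by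
  have hF : Measurable fun y : EuclideanSpace ℝ (Fin d) =>
      ENNReal.ofReal (min 1 (‖y‖ ^ 2)) := by fun_prop
  have hres : ν.restrict {(0 : EuclideanSpace ℝ (Fin d))}ᶜ = ν := by
    rw [Measure.restrict_congr_set (MeasureTheory.ae_eq_univ.2 (by rwa [compl_compl])),
      Measure.restrict_univ]
  have hbind : ∫⁻ y, ENNReal.ofReal (min 1 (‖y‖ ^ 2)) ∂(arcsineT 1 ν) =
      ∫⁻ x, (∫⁻ y, ENNReal.ofReal (min 1 (‖y‖ ^ 2))
        ∂(Measure.map (fun r : ℝ => (r / ‖x‖) • x)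
          ((volume.restrict (Set.Ioo (0:ℝ) (‖x‖ ^ ((1:ℝ)/2)))).withDensity
            (fun r => ENNReal.ofReal (2 / Real.pi *
              (‖x‖ ^ (1:ℝ) - r ^ 2) ^ (-(1/2) : ℝ)))))) ∂ν := by
    unfold arcsineT
    rw [Measure.lintegral_bind kernelMeas.aemeasurable hF.aemeasurable, hres]
  have hae : ∀ᵐ x ∂ν, x ≠ (0 : EuclideanSpace ℝ (Fin d)) := by
    refine (MeasureTheory.ae_iff).2 ?_
    simpa using hν
  have hinner : ∀ x : EuclideanSpace ℝ (Fin d), x ≠ 0 →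
      (∫⁻ y, ENNReal.ofReal (min 1 (‖y‖ ^ 2))
        ∂(Measure.map (fun r : ℝ => (r / ‖x‖) • x)
          ((volume.restrict (Set.Ioo (0:ℝ) (‖x‖ ^ ((1:ℝ)/2)))).withDensity
            (fun r => ENNReal.ofReal (2 / Real.pi *
              (‖x‖ ^ (1:ℝ) - r ^ 2) ^ (-(1/2) : ℝ))))))
      = ∫⁻ r in Set.Ioo (0:ℝ) (‖x‖ ^ ((1:ℝ)/2)),
          ENNReal.ofReal (2 / Real.pi * (‖x‖ - r ^ 2) ^ (-(1/2) : ℝ)) *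
            ENNReal.ofReal (min 1 (r ^ 2)) := by
    intro x hx
    have hx0 : (0:ℝ) < ‖x‖ := norm_pos_iff.2 hx
    rw [kernel_lintegral x _ hF]
    refine MeasureTheory.setLIntegral_congr_fun measurableSet_Ioo
      ?_
    rintro r ⟨hr0, _⟩
    have hnorm : ‖(r / ‖x‖) • x‖ = r := by
      rw [norm_smul, Real.norm_eq_abs, abs_of_pos (div_pos hr0 hx0),
        div_mul_cancel₀ _ hx0.ne']
    simp only [hnorm]
  set c : ℝ≥0∞ := ENNReal.ofReal ((Real.sqrt 2 - 1) / Real.pi) with hcdef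
  have hw1 : (1:ℝ) < Real.sqrt 2 := by
    nlinarith [Real.sq_sqrt (by norm_num : (0:ℝ) ≤ 2), Real.sqrt_nonneg 2]
  have hc0 : c ≠ 0 := by
    rw [hcdef]
    exact (ENNReal.ofReal_pos.2 (div_pos (by linarith) Real.pi_pos)).ne'
  have hMeasMin : Measurable fun x : EuclideanSpace ℝ (Fin d) =>
      ENNReal.ofReal (min 1 ‖x‖) := by fun_prop
  have hupper : ∫⁻ y, ENNReal.ofReal (min 1 (‖y‖ ^ 2)) ∂(arcsineT 1 ν) ≤
      2 * ∫⁻ x, ENNReal.ofReal (min 1 ‖x‖) ∂ν := by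
    rw [hbind, ← MeasureTheory.lintegral_const_mul _ hMeasMin]
    refine MeasureTheory.lintegral_mono_ae (hae.mono fun x hx => ?_)
    rw [hinner x hx]
    exact aux_upper ‖x‖ (norm_pos_iff.2 hx)
  have hlower : c * ∫⁻ x, ENNReal.ofReal (min 1 ‖x‖) ∂ν ≤
      ∫⁻ y, ENNReal.ofReal (min 1 (‖y‖ ^ 2)) ∂(arcsineT 1 ν) := by
    rw [hbind, ← MeasureTheory.lintegral_const_mul _ hMeasMin]
    refine MeasureTheory.lintegral_mono_ae (hae.mono fun x hx => ?_)
    rw [hinner x hx]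
    exact aux_lower ‖x‖ (norm_pos_iff.2 hx)
  constructor
  · intro h
    by_contra hI
    have hI' : (∫⁻ x, ENNReal.ofReal (min 1 ‖x‖) ∂ν) = ⊤ := by
      simpa [lt_top_iff_ne_top, not_not] using hI
    rw [hI', ENNReal.mul_top hc0] at hlower
    exact absurd (lt_of_le_of_lt hlower h) (lt_irrefl ⊤)
  · intro h
    exact lt_of_le_of_lt hupper (ENNReal.mul_lt_top (by norm_num) h)
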